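/- arXiv:2303.00464 — 3 statements merged into one kernel-verified Lean document; each statement's English description precedes it below -/
import Mathlib

section
/- If a : ℤ → ℝ is a non-negative sequence in ℓ¹(ℤ), then for every λ > 0, the cardinality of {m ∈ ℤ : M'a(m) > 4λ} is at most 3 times the cardinality of {m ∈ ℤ : M_d a(m) > λ}, where M' is the centered maximal operator and M_d is the dyadic maximal operator. -/
open scoped ENNReal BigOperators

/-- Average of `|a|` over a finite set of integers, valued in `ℝ≥0∞`. -/
noncomputable def eavg (a : ℤ → ℝ) (I : Finset ℤ) : ℝ≥0∞ :=
  (∑ n ∈ I, ENNReal.ofReal |a n|) / (I.card : ℝ≥0∞)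

/-- Centered Hardy–Littlewood maximal operator on ℤ. -/
noncomputable def Mc (a : ℤ → ℝ) (m : ℤ) : ℝ≥0∞ :=
  ⨆ (r : ℕ) (_ : 1 ≤ r), eavg a (Finset.Icc (m - r) (m + r))

/-- Dyadic Hardy–Littlewood maximal operator on ℤ: supremum of averages over dyadic
intervals `[(j-1)2^N + 1, j 2^N]`, `N ≥ 1`, containing `m`. -/
noncomputable def Md (a : ℤ → ℝ) (m : ℤ) : ℝ≥0∞ :=
  ⨆ (N : ℕ) (_ : 1 ≤ N) (j : ℤ) (_ : m ∈ Finset.Icc ((j - 1) * 2 ^ N + 1) (j * 2 ^ N)),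
    eavg a (Finset.Icc ((j - 1) * 2 ^ N + 1) (j * 2 ^ N))

noncomputable def Dy (N : ℕ) (j : ℤ) : Finset ℤ := Finset.Icc ((j - 1) * 2 ^ N + 1) (j * 2 ^ N)

lemma Dy_card (N : ℕ) (j : ℤ) : (Dy N j).card = 2 ^ N := by
  rw [Dy, Int.card_Icc]
  have h : j * 2 ^ N + 1 - ((j - 1) * 2 ^ N + 1) = (((2^N : ℕ)) : ℤ) := by push_cast; ring
  rw [h, Int.toNat_natCast]

lemma mem_Dy {N : ℕ} {j x : ℤ} : x ∈ Dy N j ↔ (j - 1) * 2 ^ N + 1 ≤ x ∧ x ≤ j * 2 ^ N := by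
  rw [Dy, Finset.mem_Icc]

lemma exists_dyadic (a : ℤ → ℝ) {lam : ℝ≥0∞} (hlam : 0 < lam) (hlamt : lam ≠ ⊤) {m : ℤ}
    (h : 4 * lam < Mc a m) :
    ∃ N j, 1 ≤ N ∧ lam < eavg a (Dy N j) ∧
      (j - 1) * 2 ^ N + 1 - 2 ^ N ≤ m ∧ m ≤ j * 2 ^ N + 2 ^ N := by
  simp only [Mc, lt_iSup_iff] at h
  obtain ⟨r, hr, havg⟩ := h
  -- choose the scale
  set N : ℕ := Nat.log 2 (2 * r) + 1 with hN
  have hN1 : 1 ≤ N := by omega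
  have hlb : 2 * r < 2 ^ N := Nat.lt_pow_succ_log_self (by norm_num) (2 * r)
  have hub : 2 ^ N ≤ 4 * r := by
    have h1 : 2 ^ Nat.log 2 (2 * r) ≤ 2 * r := Nat.pow_log_le_self 2 (by omega)
    calc 2 ^ N = 2 * 2 ^ Nat.log 2 (2 * r) := by rw [hN, pow_succ]; ring
    _ ≤ 2 * (2 * r) := by omega
    _ = 4 * r := by ring
  -- integer versions
  have hlbZ : (2 * r : ℤ) < 2 ^ N := by exact_mod_cast hlb
  have hubZ : (2 ^ N : ℤ) ≤ 4 * r := by exact_mod_cast hub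
  have hpZ : (0:ℤ) < 2 ^ N := by positivity
  set j₀ : ℤ := (m - r - 1) / 2 ^ N + 1 with hj₀
  have e1 := Int.mul_ediv_add_emod (m - r - 1) (2 ^ N)
  have e2 := Int.emod_nonneg (m - r - 1) (ne_of_gt hpZ)
  have e3 := Int.emod_lt_of_pos (m - r - 1) hpZ
  have hjl : (j₀ - 1) * 2 ^ N + 1 ≤ m - r := by
    have : (j₀ - 1) * 2 ^ N = 2 ^ N * ((m - r - 1) / 2 ^ N) := by rw [hj₀]; ring
    linarith
  have hju : m - r ≤ j₀ * 2 ^ N := by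
    have : j₀ * 2 ^ N = 2 ^ N * ((m - r - 1) / 2 ^ N) + 2 ^ N := by rw [hj₀]; ring
    linarith
  -- the interval is covered by two dyadic intervals
  have hcover : Finset.Icc (m - (r:ℤ)) (m + r) ⊆ Dy N j₀ ∪ Dy N (j₀ + 1) := by
    intro x hx
    rw [Finset.mem_Icc] at hx
    rcases le_or_gt x (j₀ * 2 ^ N) with hc | hc
    · exact Finset.mem_union_left _ (mem_Dy.2 ⟨by linarith, hc⟩)
    · refine Finset.mem_union_right _ (mem_Dy.2 ⟨by linarith, ?_⟩)
      have : x ≤ m + r := hx.2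
      have h2 : (m:ℤ) + r ≤ j₀ * 2 ^ N + 2 * r := by linarith
      linarith
  -- disjointness
  have hdisj : Disjoint (Dy N j₀) (Dy N (j₀ + 1)) := by
    rw [Finset.disjoint_left]
    intro x hx hx'
    rw [mem_Dy] at hx hx'
    have h1 : (j₀ + 1 - 1) * 2 ^ N = j₀ * 2 ^ N := by ring
    linarith [hx.2, hx'.1]
  set S : ℝ≥0∞ := ∑ n ∈ Finset.Icc (m - (r:ℤ)) (m + r), ENNReal.ofReal |a n| with hS
  set S₀ : ℝ≥0∞ := ∑ n ∈ Dy N j₀, ENNReal.ofReal |a n| with hS0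
  set S₁ : ℝ≥0∞ := ∑ n ∈ Dy N (j₀+1), ENNReal.ofReal |a n| with hS1
  have hcard : ((Finset.Icc (m - (r:ℤ)) (m + r)).card : ℝ≥0∞) = ((2 * r + 1 : ℕ) : ℝ≥0∞) := by
    rw [Int.card_Icc]
    congr 1
    have : m + (r:ℤ) + 1 - (m - r) = ((2 * r + 1 : ℕ) : ℤ) := by push_cast; ring
    rw [this, Int.toNat_natCast]
  have hL0 : ((2 * r + 1 : ℕ) : ℝ≥0∞) ≠ 0 := by simp
  have hLt : ((2 * r + 1 : ℕ) : ℝ≥0∞) ≠ ⊤ := ENNReal.natCast_ne_top _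
  have hSgt : 4 * lam * ((2 * r + 1 : ℕ) : ℝ≥0∞) < S := by
    rw [eavg, hcard, ← hS] at havg
    exact (ENNReal.lt_div_iff_mul_lt (Or.inl hL0) (Or.inl hLt)).1 havg
  have hsplit : S ≤ S₀ + S₁ := by
    calc S ≤ ∑ n ∈ Dy N j₀ ∪ Dy N (j₀+1), ENNReal.ofReal |a n| :=
          Finset.sum_le_sum_of_subset hcover
    _ = S₀ + S₁ := Finset.sum_union hdisj
  -- one of the two has big mass
  have hbig : lam * ((2:ℝ≥0∞) ^ N) < S₀ ∨ lam * ((2:ℝ≥0∞) ^ N) < S₁ := by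
    by_contra hc
    push_neg at hc
    have hSle : S ≤ 2 * (lam * 2 ^ N) := by
      calc S ≤ S₀ + S₁ := hsplit
      _ ≤ lam * 2 ^ N + lam * 2 ^ N := add_le_add hc.1 hc.2
      _ = 2 * (lam * 2 ^ N) := by ring
    have h2N : ((2:ℝ≥0∞) ^ N) ≤ ((4 * r : ℕ) : ℝ≥0∞) := by
      have : ((2 ^ N : ℕ) : ℝ≥0∞) ≤ ((4 * r : ℕ) : ℝ≥0∞) := by exact_mod_cast Nat.cast_le.2 hub
      simpa using this
    have hfin : lam * ((8 * r : ℕ) : ℝ≥0∞) ≠ ⊤ := by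
      exact ENNReal.mul_ne_top hlamt (ENNReal.natCast_ne_top _)
    have hchain : S ≤ lam * ((8 * r : ℕ) : ℝ≥0∞) := by
      calc S ≤ 2 * (lam * 2 ^ N) := hSle
      _ ≤ 2 * (lam * ((4 * r : ℕ) : ℝ≥0∞)) := by
          gcongr
      _ = lam * ((8 * r : ℕ) : ℝ≥0∞) := by
          push_cast; ring
    have hgt : lam * ((8 * r : ℕ) : ℝ≥0∞) < S := by
      have h4 : (4:ℝ≥0∞) * lam * ((2 * r + 1 : ℕ) : ℝ≥0∞) = lam * ((8 * r : ℕ) : ℝ≥0∞) + 4 * lam := by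
        push_cast; ring
      rw [h4] at hSgt
      exact lt_trans (ENNReal.lt_add_right hfin (by simp [hlam.ne'])) hSgt
    exact absurd (lt_of_lt_of_le hgt hchain) (lt_irrefl _)
  -- conclude
  have havgD : ∀ j : ℤ, lam * ((2:ℝ≥0∞) ^ N) < (∑ n ∈ Dy N j, ENNReal.ofReal |a n|) →
      lam < eavg a (Dy N j) := by
    intro j hj
    rw [eavg, Dy_card]
    have hc2 : ((2 ^ N : ℕ) : ℝ≥0∞) = (2:ℝ≥0∞) ^ N := by push_cast; ring
    rw [hc2]
    refine (ENNReal.lt_div_iff_mul_lt (Or.inl ?_) (Or.inl ?_)).2 hj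
    · positivity
    · exact ENNReal.pow_ne_top (by simp)
  rcases hbig with hb | hb
  · exact ⟨N, j₀, hN1, havgD _ hb, by linarith, by linarith [hju, hlbZ]⟩
  · refine ⟨N, j₀ + 1, hN1, havgD _ hb, by linarith, ?_⟩
    have : m + (r:ℤ) ≤ j₀ * 2 ^ N + 2 * r := by linarith
    linarith

lemma Dy_nested {N₁ N₂ : ℕ} (h : N₁ ≤ N₂) {j₁ j₂ x : ℤ}
    (h₁ : x ∈ Dy N₁ j₁) (h₂ : x ∈ Dy N₂ j₂) : Dy N₁ j₁ ⊆ Dy N₂ j₂ := by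
  rw [mem_Dy] at h₁ h₂
  have hp : (0:ℤ) < 2 ^ N₁ := by positivity
  have hpow : (2:ℤ) ^ N₂ = 2 ^ (N₂ - N₁) * 2 ^ N₁ := by
    rw [← pow_add]; congr 1; omega
  set q : ℤ := 2 ^ (N₂ - N₁) with hq
  have hB : j₁ * 2 ^ N₁ ≤ j₂ * 2 ^ N₂ := by
    by_contra hc
    push_neg at hc
    rw [hpow, ← mul_assoc] at hc
    have h1 : j₂ * q < j₁ := lt_of_mul_lt_mul_right hc hp.le
    have h2 : (j₂ * q) * 2 ^ N₁ ≤ (j₁ - 1) * 2 ^ N₁ :=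
      mul_le_mul_of_nonneg_right (by omega) hp.le
    rw [mul_assoc, ← hpow] at h2
    linarith [h₁.1, h₂.2]
  have hA : (j₂ - 1) * 2 ^ N₂ + 1 ≤ (j₁ - 1) * 2 ^ N₁ + 1 := by
    by_contra hc
    push_neg at hc
    have hc' : (j₁ - 1) * 2 ^ N₁ < (j₂ - 1) * 2 ^ N₂ := by omega
    rw [hpow, ← mul_assoc] at hc'
    have h1 : j₁ - 1 < (j₂ - 1) * q := lt_of_mul_lt_mul_right hc' hp.le
    have h2 : j₁ * 2 ^ N₁ ≤ ((j₂ - 1) * q) * 2 ^ N₁ :=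
      mul_le_mul_of_nonneg_right (by omega) hp.le
    rw [mul_assoc, ← hpow] at h2
    linarith [h₁.2, h₂.1]
  rw [Dy, Dy]
  exact Finset.Icc_subset_Icc hA hB



/-- for a non-negative summable sequence,
`#{M' a > 4λ} ≤ 3 · #{M_d a > λ}`. -/
theorem card_centered_gt_le_three_card_dyadic_gt
    (a : ℤ → ℝ) (ha : ∀ n, 0 ≤ a n) (hsum : Summable a)
    (lam : ℝ≥0∞) (hlam : 0 < lam) :
    {m : ℤ | 4 * lam < Mc a m}.encard ≤ 3 * {m : ℤ | lam < Md a m}.encard := by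
  classical
  by_cases hlamt : lam = ⊤
  · have hempty : {m : ℤ | 4 * lam < Mc a m} = ∅ := by
      ext m
      simp only [Set.mem_setOf_eq, Set.mem_empty_iff_false, iff_false, not_lt, hlamt]
      rw [ENNReal.mul_top (by norm_num)]
      exact le_top
    rw [hempty, Set.encard_empty]
    exact zero_le
  set E : Set ℤ := {m : ℤ | lam < Md a m} with hEdef
  by_cases hE : E.Finite
  swap
  · rw [Set.Infinite.encard_eq hE]
    simpa using le_top
  set F : Finset ℤ := hE.toFinset with hF
  -- every heavy dyadic interval is inside F
  have hDE : ∀ (N : ℕ) (j : ℤ), 1 ≤ N → lam < eavg a (Dy N j) → Dy N j ⊆ F := by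
    intro N j hN hav x hx
    rw [hF, Set.Finite.mem_toFinset]
    show lam < Md a x
    refine lt_of_lt_of_le hav ?_
    rw [Md]
    rw [Dy] at hx
    exact le_iSup_of_le N (le_iSup_of_le hN (le_iSup_of_le j (le_iSup_of_le hx le_rfl)))
  have hbound : ∀ (N : ℕ) (j : ℤ), 1 ≤ N → lam < eavg a (Dy N j) → N ≤ F.card := by
    intro N j hN hav
    have h1 : 2 ^ N ≤ F.card := by
      rw [← Dy_card N j]
      exact Finset.card_le_card (hDE N j hN hav)
    have h2 : N < 2 ^ N := Nat.lt_two_pow_self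
    omega
  -- for each point of the centered set, a maximal heavy dyadic interval nearby
  have key : ∀ m : ℤ, 4 * lam < Mc a m → ∃ (N : ℕ) (j : ℤ),
      (1 ≤ N ∧ lam < eavg a (Dy N j)) ∧
      ((j - 1) * 2 ^ N + 1 - 2 ^ N ≤ m ∧ m ≤ j * 2 ^ N + 2 ^ N) ∧
      (∀ (N'' : ℕ) (j'' : ℤ), 1 ≤ N'' → lam < eavg a (Dy N'' j'') →
        Dy N j ⊆ Dy N'' j'' → Dy N j = Dy N'' j'') := by
    intro m hm
    obtain ⟨N, j, hN1, hav, hw1, hw2⟩ := exists_dyadic a hlam hlamt hm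
    set Q : ℕ → Prop := fun k => ∃ j', (1 ≤ k ∧ lam < eavg a (Dy k j')) ∧ Dy N j ⊆ Dy k j' with hQ
    set c := F.card with hc
    have hQN : Q N := ⟨j, ⟨hN1, hav⟩, Finset.Subset.refl _⟩
    have hNc : N ≤ c := hbound N j hN1 hav
    have hQspec : Q (Nat.findGreatest Q c) := Nat.findGreatest_spec hNc hQN
    set N' := Nat.findGreatest Q c with hN'
    obtain ⟨j', ⟨hN'1, hav'⟩, hsub⟩ := hQspec
    have hNN' : N ≤ N' := Nat.le_findGreatest hNc hQN
    have hpowle : (2:ℤ) ^ N ≤ 2 ^ N' := pow_le_pow_right₀ (by norm_num) hNN'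
    have hne : (j - 1) * 2 ^ N + 1 ≤ j * 2 ^ N := by
      have : (0:ℤ) < 2 ^ N := by positivity
      linarith
    have hsub' := hsub
    rw [Dy, Dy] at hsub'
    have hend := (Finset.Icc_subset_Icc_iff hne).1 hsub'
    refine ⟨N', j', ⟨hN'1, hav'⟩, ⟨by linarith [hend.1], by linarith [hend.2]⟩, ?_⟩
    intro N'' j'' h1 h2 hsub2
    have hQ'' : Q N'' := ⟨j'', ⟨h1, h2⟩, hsub.trans hsub2⟩
    have hb : N'' ≤ c := hbound N'' j'' h1 h2
    have hle : N'' ≤ N' := by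
      by_contra hlt
      exact Nat.findGreatest_is_greatest (not_le.1 hlt) hb hQ''
    refine Finset.eq_of_subset_of_card_le hsub2 ?_
    rw [Dy_card, Dy_card]
    exact pow_le_pow_right₀ (by norm_num) hle
  choose Nf jf hk using key
  set Mset : Set ℤ := {m : ℤ | 4 * lam < Mc a m} with hMset
  set T : Finset ℤ := {-1, 0, 1} with hT
  set G : ℤ → ℤ × ℤ := fun m =>
    if hm : 4 * lam < Mc a m then
      (if m < (jf m hm - 1) * 2 ^ (Nf m hm) + 1 then (m + 2 ^ (Nf m hm), -1)
       else if jf m hm * 2 ^ (Nf m hm) < m then (m - 2 ^ (Nf m hm), 1)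
       else (m, 0))
    else (0, 0) with hG
  have hGspec : ∀ m (hm : 4 * lam < Mc a m),
      (G m).1 ∈ Dy (Nf m hm) (jf m hm) ∧ (G m).2 ∈ T ∧
      m = (G m).1 + (G m).2 * 2 ^ (Nf m hm) := by
    intro m hm
    obtain ⟨⟨hN1, hav⟩, ⟨hw1, hw2⟩, hmax⟩ := hk m hm
    have hp : (0:ℤ) < 2 ^ (Nf m hm) := by positivity
    simp only [hG, dif_pos hm]
    split_ifs with h1 h2 <;> dsimp only
    · refine ⟨mem_Dy.2 ⟨by linarith, by linarith⟩, by simp [hT], by ring⟩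
    · refine ⟨mem_Dy.2 ⟨by linarith, by linarith⟩, by simp [hT], by ring⟩
    · refine ⟨mem_Dy.2 ⟨by linarith, by linarith⟩, by simp [hT], by ring⟩
  have hinj : Set.InjOn G Mset := by
    intro m₁ hm₁ m₂ hm₂ heq
    have hm₁' : 4 * lam < Mc a m₁ := hm₁
    have hm₂' : 4 * lam < Mc a m₂ := hm₂
    obtain ⟨he₁, ht₁, hrel₁⟩ := hGspec m₁ hm₁'
    obtain ⟨he₂, ht₂, hrel₂⟩ := hGspec m₂ hm₂'
    obtain ⟨⟨hN1a, hava⟩, _, hmaxa⟩ := hk m₁ hm₁'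
    obtain ⟨⟨hN1b, havb⟩, _, hmaxb⟩ := hk m₂ hm₂'
    have he₂' : (G m₁).1 ∈ Dy (Nf m₂ hm₂') (jf m₂ hm₂') := by rw [heq]; exact he₂
    have heqD : Dy (Nf m₁ hm₁') (jf m₁ hm₁') = Dy (Nf m₂ hm₂') (jf m₂ hm₂') := by
      rcases le_total (Nf m₁ hm₁') (Nf m₂ hm₂') with hle | hle
      · exact hmaxa _ _ hN1b havb (Dy_nested hle he₁ he₂')
      · exact (hmaxb _ _ hN1a hava (Dy_nested hle he₂' he₁)).symm
    have hcardeq : (2:ℕ) ^ (Nf m₁ hm₁') = 2 ^ (Nf m₂ hm₂') := by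
      rw [← Dy_card (Nf m₁ hm₁') (jf m₁ hm₁'), ← Dy_card (Nf m₂ hm₂') (jf m₂ hm₂'), heqD]
    have hcardeqZ : (2:ℤ) ^ (Nf m₁ hm₁') = 2 ^ (Nf m₂ hm₂') := by exact_mod_cast hcardeq
    have h1 : (G m₁).1 = (G m₂).1 := by rw [heq]
    have h2 : (G m₁).2 = (G m₂).2 := by rw [heq]
    rw [hrel₁, hrel₂, h1, h2, hcardeqZ]
  have himg : G '' Mset ⊆ ↑(F ×ˢ T) := by
    rintro _ ⟨m, hm, rfl⟩
    have hm' : 4 * lam < Mc a m := hm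
    obtain ⟨he, ht, _⟩ := hGspec m hm'
    obtain ⟨⟨hN1, hav⟩, _, _⟩ := hk m hm'
    rw [Finset.coe_product]
    exact ⟨hDE _ _ hN1 hav he, ht⟩
  calc Mset.encard = (G '' Mset).encard := (hinj.encard_image).symm
  _ ≤ (↑(F ×ˢ T) : Set (ℤ × ℤ)).encard := Set.encard_mono himg
  _ = ((F ×ˢ T).card : ℕ∞) := Set.encard_coe_eq_coe_finsetCard _
  _ = ((F.card * 3 : ℕ) : ℕ∞) := by
      have hTcard : T.card = 3 := by rw [hT]; decide
      rw [Finset.card_product, hTcard]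
  _ = 3 * E.encard := by
      rw [hE.encard_eq_coe_toFinset_card, ← hF]
      push_cast
      ring
end

section
/- If w : ℤ → ℝ≥0 and a : ℤ → ℝ is a sequence in ℓ¹(ℤ), then there is a constant C₁ (depending only on the dimension-free constants of the construction) such that for every λ > 0, ∑_{{m : Ma(m) > λ}} w(m) ≤ (C₁/λ) ∑_{m∈ℤ} |a(m)| Mw(m), where M is the Hardy-Littlewood maximal operator on ℤ. -/
open scoped ENNReal BigOperators NNReal

/-- Uncentered Hardy–Littlewood maximal operator over finite intervals of ℤ. -/
noncomputable def Mhl (a : ℤ → ℝ) (m : ℤ) : ℝ≥0∞ :=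
  ⨆ (i : ℤ) (j : ℤ) (_ : m ∈ Finset.Icc i j), eavg a (Finset.Icc i j)

/-- Sum over a `biUnion` is at most the double sum, for `ℝ≥0∞`. -/
lemma sum_biUnion_le' {α : Type*} [DecidableEq α] (T : Finset α) (t : α → Finset ℤ)
    (f : ℤ → ℝ≥0∞) : ∑ x ∈ T.biUnion t, f x ≤ ∑ q ∈ T, ∑ x ∈ t q, f x := by
  induction T using Finset.induction with
  | empty => simp
  | insert _ _ h ih =>
    rename_i q T'
    rw [Finset.biUnion_insert, Finset.sum_insert h]
    calc ∑ x ∈ t q ∪ T'.biUnion t, f x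
        ≤ ∑ x ∈ t q, f x + ∑ x ∈ T'.biUnion t, f x := by
          have h2 := Finset.sum_union_inter (s₁ := t q) (s₂ := T'.biUnion t) (f := f)
          calc ∑ x ∈ t q ∪ T'.biUnion t, f x
              ≤ ∑ x ∈ t q ∪ T'.biUnion t, f x + ∑ x ∈ t q ∩ T'.biUnion t, f x :=
                le_self_add
            _ = _ := h2
      _ ≤ ∑ x ∈ t q, f x + ∑ q ∈ T', ∑ x ∈ t q, f x := add_le_add_right ih _

/-- Finite Vitali covering lemma on ℤ. -/
lemma vitali_int : ∀ (n : ℕ) (S : Finset (ℤ × ℤ)), S.card ≤ n → (∀ p ∈ S, p.1 ≤ p.2) →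
    ∃ T ⊆ S, ((T : Set (ℤ × ℤ)).PairwiseDisjoint fun p => Finset.Icc p.1 p.2) ∧
      ∀ p ∈ S, ∃ q ∈ T,
        Finset.Icc p.1 p.2 ⊆ Finset.Icc (2*q.1 - q.2) (2*q.2 - q.1) := by
  intro n
  induction n with
  | zero =>
    intro S hcard _
    refine ⟨∅, Finset.empty_subset _, by simp [Set.PairwiseDisjoint, Set.Pairwise], ?_⟩
    intro p hp
    exact absurd hp (by simp [Finset.card_eq_zero.mp (Nat.le_zero.mp hcard)])
  | succ k ih =>
    intro S hcard hS
    rcases S.eq_empty_or_nonempty with rfl | hne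
    · exact ⟨∅, Finset.empty_subset _, by simp [Set.PairwiseDisjoint, Set.Pairwise],
        fun p hp => absurd hp (by simp)⟩
    obtain ⟨p₀, hp₀S, hp₀max⟩ := S.exists_max_image (fun p => p.2 - p.1) hne
    classical
    set S' := S.filter (fun q => Disjoint (Finset.Icc q.1 q.2) (Finset.Icc p₀.1 p₀.2))
      with hS'def
    have hp₀ : p₀.1 ≤ p₀.2 := hS p₀ hp₀S
    have hp₀notS' : p₀ ∉ S' := by
      simp only [hS'def, Finset.mem_filter]
      rintro ⟨-, hdisj⟩
      exact (Finset.not_disjoint_iff.mpr ⟨p₀.1, by simp [hp₀], by simp [hp₀]⟩) hdisj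
    have hS'sub : S' ⊆ S.erase p₀ := by
      intro q hq
      rcases Finset.mem_filter.mp hq with ⟨hqS, hqd⟩
      refine Finset.mem_erase.mpr ⟨?_, hqS⟩
      rintro rfl; exact hp₀notS' hq
    have hcard' : S'.card ≤ k := by
      have := Finset.card_le_card hS'sub
      have h2 := Finset.card_erase_of_mem hp₀S
      omega
    obtain ⟨T', hT'sub, hT'disj, hT'cov⟩ := ih S' hcard'
      (fun p hp => hS p (Finset.mem_filter.mp hp).1)
    refine ⟨insert p₀ T', ?_, ?_, ?_⟩
    · intro q hq
      rcases Finset.mem_insert.mp hq with rfl | hq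
      · exact hp₀S
      · exact (Finset.mem_filter.mp (hT'sub hq)).1
    · intro q hq r hr hqr
      simp only [Finset.coe_insert, Set.mem_insert_iff] at hq hr
      rcases hq with rfl | hq <;> rcases hr with rfl | hr
      · exact absurd rfl hqr
      · exact ((Finset.mem_filter.mp (hT'sub hr)).2).symm
      · exact (Finset.mem_filter.mp (hT'sub hq)).2
      · exact hT'disj hq hr hqr
    · intro p hpS
      by_cases hp' : p ∈ S'
      · obtain ⟨q, hq, hsub⟩ := hT'cov p hp'
        exact ⟨q, Finset.mem_insert_of_mem hq, hsub⟩
      · refine ⟨p₀, Finset.mem_insert_self _ _, ?_⟩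
        have hnd : ¬ Disjoint (Finset.Icc p.1 p.2) (Finset.Icc p₀.1 p₀.2) := by
          intro hd
          exact hp' (Finset.mem_filter.mpr ⟨hpS, hd⟩)
        obtain ⟨x, hx1, hx2⟩ := Finset.not_disjoint_iff.mp hnd
        simp only [Finset.mem_Icc] at hx1 hx2
        have hlen := hp₀max p hpS
        intro y hy
        simp only [Finset.mem_Icc] at hy ⊢
        omega

/-- there is an absolute constant `C₁` such that for every weight
`w : ℤ → ℝ≥0` and every `a ∈ ℓ¹(ℤ)`, for all `λ > 0`,
`∑_{{m : Ma(m) > λ}} w(m) ≤ (C₁/λ) ∑_m |a m| · Mw(m)`. -/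
theorem weak_one_one_with_Mw :
    ∃ C : ℝ≥0∞, C ≠ ∞ ∧ ∀ (w : ℤ → ℝ≥0) (a : ℤ → ℝ),
      Summable (fun n => |a n|) → ∀ lam : ℝ≥0∞, 0 < lam →
      (∑' m : {m : ℤ | lam < Mhl a m}, (w m : ℝ≥0∞)) ≤
        C / lam * ∑' m : ℤ, ENNReal.ofReal |a m| * Mhl (fun n => (w n : ℝ)) m := by
  classical
  refine ⟨3, by norm_num, ?_⟩
  intro w a _ lam hlam
  set Z := ∑' m : ℤ, ENNReal.ofReal |a m| * Mhl (fun n => (w n : ℝ)) m with hZ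
  rcases eq_or_ne lam ∞ with rfl | hlamtop
  · have : IsEmpty {m : ℤ | (∞ : ℝ≥0∞) < Mhl a m} := by
      constructor; rintro ⟨m, hm⟩
      exact (not_top_lt (α := ℝ≥0∞)) hm
    rw [tsum_empty]
    exact zero_le
  -- main case : lam ≠ ∞, lam ≠ 0
  have hlam0 : lam ≠ 0 := hlam.ne'
  -- reduce to finite partial sums
  rw [ENNReal.tsum_eq_iSup_sum]
  refine iSup_le fun F => ?_
  set F' : Finset ℤ := F.image Subtype.val with hF'
  have hsum_eq : ∑ x ∈ F, (w x.val : ℝ≥0∞) = ∑ m ∈ F', (w m : ℝ≥0∞) := by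
    rw [hF', Finset.sum_image (by intro x _ y _ h; exact Subtype.ext h)]
  rw [hsum_eq]
  have hF'mem : ∀ m ∈ F', lam < Mhl a m := by
    intro m hm
    rw [hF'] at hm
    obtain ⟨x, _, rfl⟩ := Finset.mem_image.mp hm
    exact x.2
  -- choose intervals
  have hchoice : ∀ m : ℤ, ∃ p : ℤ × ℤ, m ∈ F' →
      (m ∈ Finset.Icc p.1 p.2 ∧ lam < eavg a (Finset.Icc p.1 p.2)) := by
    intro m
    by_cases hm : m ∈ F'
    · have := hF'mem m hm
      rw [Mhl] at this
      rw [lt_iSup_iff] at this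
      obtain ⟨i, hi⟩ := this
      rw [lt_iSup_iff] at hi
      obtain ⟨j, hj⟩ := hi
      rw [lt_iSup_iff] at hj
      obtain ⟨hmem, hlt⟩ := hj
      exact ⟨(i, j), fun _ => ⟨hmem, hlt⟩⟩
    · exact ⟨(0, 0), fun h => absurd h hm⟩
  choose f hf using hchoice
  set S : Finset (ℤ × ℤ) := F'.image f with hSdef
  have hSprop : ∀ p ∈ S, p.1 ≤ p.2 ∧ lam < eavg a (Finset.Icc p.1 p.2) := by
    intro p hp
    obtain ⟨m, hm, rfl⟩ := Finset.mem_image.mp hp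
    obtain ⟨hmem, hlt⟩ := hf m hm
    rw [Finset.mem_Icc] at hmem
    exact ⟨le_trans hmem.1 hmem.2, hlt⟩
  obtain ⟨T, hTS, hTdisj, hTcov⟩ := vitali_int S.card S le_rfl (fun p hp => (hSprop p hp).1)
  -- F' is covered by the 3-expanded intervals of T
  have hcover : F' ⊆ T.biUnion (fun q => Finset.Icc (2*q.1 - q.2) (2*q.2 - q.1)) := by
    intro m hm
    have hfm : f m ∈ S := Finset.mem_image_of_mem f hm
    obtain ⟨q, hq, hsub⟩ := hTcov (f m) hfm
    exact Finset.mem_biUnion.mpr ⟨q, hq, hsub (hf m hm).1⟩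
  -- key per-interval estimate
  have hkey : ∀ q ∈ T, lam * (∑ m ∈ Finset.Icc (2*q.1 - q.2) (2*q.2 - q.1), (w m : ℝ≥0∞))
      ≤ 3 * ∑ n ∈ Finset.Icc q.1 q.2, ENNReal.ofReal |a n| * Mhl (fun n => (w n : ℝ)) n := by
    intro q hq
    obtain ⟨hq12, hqavg⟩ := hSprop q (hTS hq)
    set I : Finset ℤ := Finset.Icc q.1 q.2 with hI
    set I3 : Finset ℤ := Finset.Icc (2*q.1 - q.2) (2*q.2 - q.1) with hI3
    set c : ℝ≥0∞ := (I.card : ℝ≥0∞) with hc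
    set c3 : ℝ≥0∞ := (I3.card : ℝ≥0∞) with hc3
    set W3 : ℝ≥0∞ := ∑ m ∈ I3, (w m : ℝ≥0∞) with hW3
    set A : ℝ≥0∞ := ∑ n ∈ I, ENNReal.ofReal |a n| with hA
    have hcardI : I.card = (q.2 - q.1 + 1).toNat := by rw [hI, Int.card_Icc]; omega
    have hcardI3 : I3.card = (3*(q.2 - q.1) + 1).toNat := by
      rw [hI3, Int.card_Icc]; omega
    have hc0 : c ≠ 0 := by
      rw [hc]; simp only [ne_eq, Nat.cast_eq_zero]; rw [hcardI]; omega
    have hctop : c ≠ ∞ := by rw [hc]; exact ENNReal.natCast_ne_top _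
    have hc30 : c3 ≠ 0 := by
      rw [hc3]; simp only [ne_eq, Nat.cast_eq_zero]; rw [hcardI3]; omega
    have hc3top : c3 ≠ ∞ := by rw [hc3]; exact ENNReal.natCast_ne_top _
    have hc3le : c3 ≤ 3 * c := by
      rw [hc, hc3]
      have : I3.card ≤ 3 * I.card := by rw [hcardI, hcardI3]; omega
      calc (I3.card : ℝ≥0∞) ≤ ((3 * I.card : ℕ) : ℝ≥0∞) := by exact_mod_cast this
        _ = 3 * c := by push_cast [hc]; ring
    -- lam * c ≤ A
    have hlamcA : lam * c ≤ A := by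
      have h1 : lam ≤ A / c := le_of_lt (by rw [eavg] at hqavg; exact hqavg)
      calc lam * c ≤ (A / c) * c := mul_le_mul_left h1 c
        _ = A := by rw [ENNReal.div_mul_cancel hc0 hctop]
    -- Mhl w ≥ W3 / c3 on I
    have hMw : ∀ n ∈ I, W3 / c3 ≤ Mhl (fun n => (w n : ℝ)) n := by
      intro n hn
      have hn3 : n ∈ I3 := by
        rw [hI, Finset.mem_Icc] at hn; rw [hI3, Finset.mem_Icc]; omega
      have heq : eavg (fun n => (w n : ℝ)) I3 = W3 / c3 := by
        rw [eavg, hW3, hc3, hI3]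
        congr 1
        refine Finset.sum_congr rfl fun k _ => ?_
        rw [abs_of_nonneg (w k).coe_nonneg, ENNReal.ofReal_coe_nnreal]
      rw [Mhl]
      rw [← heq]
      rw [hI3] at hn3 ⊢
      exact le_iSup_of_le (2*q.1 - q.2) (le_iSup_of_le (2*q.2 - q.1)
        (le_iSup_of_le hn3 le_rfl))
    -- X ≥ A * (W3 / c3)
    have hX : A * (W3 / c3) ≤ ∑ n ∈ I, ENNReal.ofReal |a n| * Mhl (fun n => (w n : ℝ)) n := by
      rw [hA, Finset.sum_mul]
      exact Finset.sum_le_sum fun n hn => mul_le_mul_right (hMw n hn) _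
    -- combine
    have hchain : lam * W3 * c3 ≤
        (3 * ∑ n ∈ I, ENNReal.ofReal |a n| * Mhl (fun n => (w n : ℝ)) n) * c3 := by
      calc lam * W3 * c3 ≤ lam * W3 * (3 * c) := mul_le_mul_right hc3le _
        _ = 3 * ((lam * c) * W3) := by ring
        _ ≤ 3 * (A * W3) := mul_le_mul_right (mul_le_mul_left hlamcA _) _
        _ = 3 * (A * (W3 / c3)) * c3 := by
            rw [mul_assoc 3 (A * (W3 / c3)) c3, mul_assoc A,
              ENNReal.div_mul_cancel hc30 hc3top]
        _ ≤ _ := mul_le_mul_left (mul_le_mul_right hX 3) c3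
    exact (ENNReal.mul_le_mul_iff_left hc30 hc3top).mp hchain
  -- put it together
  have hmain : lam * ∑ m ∈ F', (w m : ℝ≥0∞) ≤ 3 * Z := by
    calc lam * ∑ m ∈ F', (w m : ℝ≥0∞)
        ≤ lam * ∑ m ∈ T.biUnion (fun q => Finset.Icc (2*q.1 - q.2) (2*q.2 - q.1)),
            (w m : ℝ≥0∞) := mul_le_mul_right (Finset.sum_le_sum_of_subset hcover) _
      _ ≤ lam * ∑ q ∈ T, ∑ m ∈ Finset.Icc (2*q.1 - q.2) (2*q.2 - q.1), (w m : ℝ≥0∞) :=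
          mul_le_mul_right (sum_biUnion_le' T _ _) _
      _ = ∑ q ∈ T, lam * ∑ m ∈ Finset.Icc (2*q.1 - q.2) (2*q.2 - q.1), (w m : ℝ≥0∞) :=
          Finset.mul_sum _ _ _
      _ ≤ ∑ q ∈ T, 3 * ∑ n ∈ Finset.Icc q.1 q.2,
            ENNReal.ofReal |a n| * Mhl (fun n => (w n : ℝ)) n :=
          Finset.sum_le_sum hkey
      _ = 3 * ∑ q ∈ T, ∑ n ∈ Finset.Icc q.1 q.2,
            ENNReal.ofReal |a n| * Mhl (fun n => (w n : ℝ)) n := (Finset.mul_sum _ _ _).symm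
      _ = 3 * ∑ n ∈ T.biUnion (fun q => Finset.Icc q.1 q.2),
            ENNReal.ofReal |a n| * Mhl (fun n => (w n : ℝ)) n := by
          rw [Finset.sum_biUnion hTdisj]
      _ ≤ 3 * Z := mul_le_mul_right (ENNReal.sum_le_tsum _) _
  rw [ENNReal.div_eq_inv_mul, mul_assoc]
  rw [← ENNReal.div_eq_inv_mul]
  rw [ENNReal.le_div_iff_mul_le (Or.inl hlam0) (Or.inl hlamtop)]
  calc (∑ m ∈ F', (w m : ℝ≥0∞)) * lam = lam * ∑ m ∈ F', (w m : ℝ≥0∞) := mul_comm _ _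
    _ ≤ 3 * Z := hmain
end

section
/- Let w : ℤ → ℝ≥0 be a weight and M the Hardy-Littlewood maximal operator on ℤ. Then for every sequence a : ℤ → ℝ, ‖Ma‖_{ℓ^∞_w(ℤ)} ≤ ‖a‖_{ℓ^∞_{Mw}(ℤ)}, where ‖b‖_{ℓ^∞_v} = inf{C ≥ 0 : v({n : |b(n)| > C}) = 0} and v(S) = ∑_{k∈S} v(k). -/
open scoped ENNReal BigOperators NNReal

/-- Weighted `ℓ^∞` "norm" of an `ℝ≥0∞`-valued sequence `b` with respect to an
`ℝ≥0∞`-valued weight `v`: the infimum of constants `C` such that the weight of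
`{n : b n > C}` vanishes. -/
noncomputable def wLinftyNorm (v : ℤ → ℝ≥0∞) (b : ℤ → ℝ≥0∞) : ℝ≥0∞ :=
  sInf {C : ℝ≥0∞ | (∑' n : {n : ℤ | C < b n}, v n) = 0}

/-- `‖Ma‖_{ℓ^∞_w(ℤ)} ≤ ‖a‖_{ℓ^∞_{Mw}(ℤ)}`. -/
theorem wLinfty_maximal_bound (w : ℤ → ℝ≥0) (a : ℤ → ℝ) :
    wLinftyNorm (fun n => (w n : ℝ≥0∞)) (Mhl a) ≤
      wLinftyNorm (fun n => Mhl (fun k => (w k : ℝ)) n)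
        (fun n => ENNReal.ofReal |a n|) := by
  refine le_sInf fun C hC => ?_
  rw [Set.mem_setOf_eq, ENNReal.tsum_eq_zero] at hC
  refine sInf_le ?_
  rw [Set.mem_setOf_eq, ENNReal.tsum_eq_zero]
  rintro ⟨m, hm⟩
  simp only [Set.mem_setOf_eq] at hm
  rw [Mhl] at hm
  obtain ⟨i, hi⟩ := lt_iSup_iff.mp hm
  obtain ⟨j, hj⟩ := lt_iSup_iff.mp hi
  obtain ⟨hmI, hC'⟩ := lt_iSup_iff.mp hj
  set I := Finset.Icc i j with hI
  have hcard0 : (I.card : ℝ≥0∞) ≠ 0 := by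
    simp only [ne_eq, Nat.cast_eq_zero, Finset.card_eq_zero]
    exact Finset.nonempty_iff_ne_empty.mp ⟨m, hmI⟩
  have hcardtop : (I.card : ℝ≥0∞) ≠ ⊤ := ENNReal.natCast_ne_top _
  have hn : ∃ n ∈ I, C < ENNReal.ofReal |a n| := by
    by_contra h
    push_neg at h
    have hle : eavg a I ≤ C := by
      rw [eavg, ENNReal.div_le_iff hcard0 hcardtop]
      calc ∑ n ∈ I, ENNReal.ofReal |a n| ≤ ∑ _n ∈ I, C :=
            Finset.sum_le_sum fun n hn => h n hn
        _ = C * I.card := by rw [Finset.sum_const, nsmul_eq_mul, mul_comm]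
    exact absurd hle (not_le.mpr hC')
  obtain ⟨n, hnI, hna⟩ := hn
  have hMw : Mhl (fun k => (w k : ℝ)) n = 0 := hC ⟨n, hna⟩
  have hle : eavg (fun k => (w k : ℝ)) I ≤ Mhl (fun k => (w k : ℝ)) n := by
    rw [Mhl]
    exact le_iSup_of_le i (le_iSup_of_le j (le_iSup_of_le hnI le_rfl))
  rw [hMw, le_zero_iff, eavg, ENNReal.div_eq_zero_iff] at hle
  rcases hle with h0 | h0
  · have := Finset.sum_eq_zero_iff.mp h0 m hmI
    simpa [abs_of_nonneg (w m).coe_nonneg, ENNReal.ofReal_coe_nnreal] using this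
  · exact absurd h0 hcardtop
end
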